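/- Let n ≥ 1 be an integer with n ≠ 2, and let 0 < R₀ < R₁. Then there exist c₀, c₁, c₂, c₃ ∈ ℝ such that the function z(r) = c₀ r³ + c₁ r^{3−n} + c₂ r + c₃ r^{1−n} satisfies z(R₀) = 1, z(R₁) = −1, z′(R₀) = 0, z′(R₁) = 0, and |z(r)| ≤ 1 for all r ∈ [R₀, R₁]. (This shows that for n ≠ 2 every annulus A_{R₀}^{R₁} with constant signature is calibrable via the radial field Z(x) = z(|x|)x/|x|, whose associated quantity L_n z is constant.) -/

import Mathlib

open Set

lemma aux_bound (z f : ℝ → ℝ) (a b : ℝ) (hab : a < b)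
    (hz : ∀ r ∈ Set.Icc a b, HasDerivAt z (f r) r)
    (hf : ∀ r ∈ Set.Ioo a b, f r ≤ 0)
    (hza : z a = 1) (hzb : z b = -1) : ∀ r ∈ Set.Icc a b, |z r| ≤ 1 := by
  have hcont : ContinuousOn z (Icc a b) := fun r hr => (hz r hr).continuousAt.continuousWithinAt
  have hanti : AntitoneOn z (Icc a b) := by
    apply antitoneOn_of_deriv_nonpos (convex_Icc a b) hcont
    · intro x hx
      rw [interior_Icc] at hx
      exact ((hz x (Ioo_subset_Icc_self hx)).differentiableAt).differentiableWithinAt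
    · intro x hx
      rw [interior_Icc] at hx
      rw [(hz x (Ioo_subset_Icc_self hx)).deriv]
      exact hf x hx
  intro r hr
  rw [abs_le]
  refine ⟨?_, ?_⟩
  · rw [← hzb]; exact hanti hr (right_mem_Icc.2 hab.le) hr.2
  · rw [← hza]; exact hanti (left_mem_Icc.2 hab.le) hr hr.1

set_option maxHeartbeats 2000000 in
lemma aux_four (m : ℕ) (A x y D : ℝ) (hA : 0 < A) (hD : 0 < D)
    {r1 r2 r3 : ℝ} (h1 : 0 < r1) (h12 : r1 < r2) (h23 : r2 < r3)
    (e1 : A * r1 ^ (m+5) + x * r1 ^ (m+3) + y * r1 ^ 2 + D = 0)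
    (e2 : A * r2 ^ (m+5) + x * r2 ^ (m+3) + y * r2 ^ 2 + D = 0)
    (e3 : A * r3 ^ (m+5) + x * r3 ^ (m+3) + y * r3 ^ 2 + D = 0) : False := by
  have h2 : 0 < r2 := h1.trans h12
  have h3 : 0 < r3 := h2.trans h23
  set H : ℝ → ℝ := fun r => A * r ^ (m+3) + x * r ^ (m+1) + y + D * (r ^ 2)⁻¹ with hH
  set H' : ℝ → ℝ := fun r =>
      A * ((m:ℝ)+3) * r ^ (m+2) + x * ((m:ℝ)+1) * r ^ m + D * (-(2 * r) / (r ^ 2) ^ 2) with hH'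
  have hder : ∀ r : ℝ, 0 < r → HasDerivAt H (H' r) r := by
    intro r hr
    have d1 : HasDerivAt (fun s : ℝ => A * s ^ (m+3)) (A * ((m:ℝ)+3) * r ^ (m+2)) r := by
      have := (hasDerivAt_pow (m+3) r).const_mul A
      refine this.congr_deriv ?_
      rw [show m+3-1 = m+2 by omega]
      push_cast
      ring
    have d2 : HasDerivAt (fun s : ℝ => x * s ^ (m+1)) (x * ((m:ℝ)+1) * r ^ m) r := by
      have := (hasDerivAt_pow (m+1) r).const_mul x
      refine this.congr_deriv ?_
      rw [show m+1-1 = m by omega]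
      push_cast
      ring
    have d3 : HasDerivAt (fun s : ℝ => D * (s ^ 2)⁻¹) (D * (-(2 * r) / (r ^ 2) ^ 2)) r := by
      have hne : r ^ 2 ≠ 0 := pow_ne_zero 2 hr.ne'
      have := ((hasDerivAt_pow 2 r).inv hne).const_mul D
      refine this.congr_deriv ?_
      push_cast
      ring
    exact ((d1.add d2).add_const y).add d3
  have hHcont : ∀ s t : ℝ, 0 < s → ContinuousOn H (Icc s t) := by
    intro s t hs
    have c1 : ContinuousOn (fun r : ℝ => A * r ^ (m+3) + x * r ^ (m+1) + y) (Icc s t) := by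
      fun_prop
    have c2 : ContinuousOn (fun r : ℝ => D * (r ^ 2)⁻¹) (Icc s t) := by
      apply ContinuousOn.mul continuousOn_const
      apply ContinuousOn.inv₀ (by fun_prop)
      intro r hr
      exact pow_ne_zero 2 (lt_of_lt_of_le hs hr.1).ne'
    exact c1.add c2
  have hzero : ∀ r : ℝ, 0 < r → A * r ^ (m+5) + x * r ^ (m+3) + y * r ^ 2 + D = 0 → H r = 0 := by
    intro r hr he
    have hne : r ^ 2 ≠ 0 := pow_ne_zero 2 hr.ne'
    have h2 : H r * r ^ 2 = A * r ^ (m+5) + x * r ^ (m+3) + y * r ^ 2 + D := by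
      simp only [hH]
      field_simp
      ring
    rw [he] at h2
    rcases mul_eq_zero.1 h2 with h | h
    · exact h
    · exact absurd h hne
  have hH1 : H r1 = 0 := hzero r1 h1 e1
  have hH2 : H r2 = 0 := hzero r2 h2 e2
  have hH3 : H r3 = 0 := hzero r3 h3 e3
  obtain ⟨s1, hs1, hds1⟩ := exists_hasDerivAt_eq_zero h12 (hHcont r1 r2 h1) (hH1.trans hH2.symm)
    (fun u hu => hder u (h1.trans hu.1))
  obtain ⟨s2, hs2, hds2⟩ := exists_hasDerivAt_eq_zero h23 (hHcont r2 r3 h2) (hH2.trans hH3.symm)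
    (fun u hu => hder u (h2.trans hu.1))
  have hs1p : 0 < s1 := h1.trans hs1.1
  have hs2p : 0 < s2 := h2.trans hs2.1
  have hs12 : s1 < s2 := hs1.2.trans hs2.1
  -- φ s := A(m+3)s^{m+5} + x(m+1)s^{m+3} − 2D = s^3 * H' s
  have hphi : ∀ s : ℝ, 0 < s → H' s = 0 →
      s ^ (m+3) * (A * ((m:ℝ)+3) * s ^ 2 + x * ((m:ℝ)+1)) = 2 * D := by
    intro s hs hd
    simp only [hH'] at hd
    have hne : s ≠ 0 := hs.ne'
    field_simp at hd
    have h3 : (s ^ (m+3) * (A * ((m:ℝ)+3) * s ^ 2 + x * ((m:ℝ)+1))) * s = (2 * D) * s := by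
      linear_combination s * hd
    exact mul_right_cancel₀ hne h3
  have k1 := hphi s1 hs1p hds1
  have k2 := hphi s2 hs2p hds2
  have hpow1 : (0:ℝ) < s1 ^ (m+3) := pow_pos hs1p _
  have hpow12 : s1 ^ (m+3) < s2 ^ (m+3) := pow_lt_pow_left₀ hs12 hs1p.le (by omega)
  have hpsi1 : 0 < A * ((m:ℝ)+3) * s1 ^ 2 + x * ((m:ℝ)+1) := by
    by_contra hc
    push_neg at hc
    nlinarith
  have hpsi12 : A * ((m:ℝ)+3) * s1 ^ 2 + x * ((m:ℝ)+1)
      < A * ((m:ℝ)+3) * s2 ^ 2 + x * ((m:ℝ)+1) := by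
    have hm : (0:ℝ) ≤ (m:ℝ) := Nat.cast_nonneg m
    nlinarith [mul_pos hA (mul_pos (sub_pos.2 hs12) (add_pos hs1p hs2p))]
  nlinarith [mul_lt_mul'' hpow12 hpsi12 hpow1.le hpsi1.le]


set_option maxHeartbeats 1000000 in
lemma aux_ki (m : ℕ) (a b : ℝ) (ha : 0 < a) (hab : a < b) :
    ((m:ℝ)+3)^2 * a^(m+3) * b^(m+3) * (b^2 - a^2)^2
      < 4 * a^2 * b^2 * (a^(m+3) - b^(m+3))^2 := by
  have hb : 0 < b := ha.trans hab
  set y : ℝ := Real.sqrt (b/a) with hydef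
  have hq : 1 < b/a := (one_lt_div ha).2 hab
  have hy : 1 < y := by
    rw [hydef]
    nlinarith [Real.sq_sqrt (by positivity : (0:ℝ) ≤ b/a), Real.sqrt_nonneg (b/a)]
  have hy0 : 0 < y := lt_trans one_pos hy
  set w : ℝ := y⁻¹ with hwdef
  have hw0 : 0 < w := inv_pos.2 hy0
  have hyw : y * w = 1 := mul_inv_cancel₀ hy0.ne'
  have hw1 : w < 1 := by nlinarith
  have hy2 : y^2 = b/a := Real.sq_sqrt (by positivity)
  have hw2 : w^2 = a/b := by
    rw [hwdef, ← one_div, div_pow, one_pow, hy2, one_div, inv_div]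
  set g : ℕ → ℝ := fun k => y^k - w^k with hgdef
  have grec : ∀ k : ℕ, g (k+2) = (y+w) * g (k+1) - g k := by
    intro k
    simp only [hgdef]
    linear_combination (w^k - y^k) * hyw
  have gpos : ∀ k : ℕ, k ≠ 0 → 0 < g k := by
    intro k hk
    have : w^k < y^k := pow_lt_pow_left₀ (by nlinarith) hw0.le hk
    simp only [hgdef]
    linarith
  have hg0 : g 0 = 0 := by simp [hgdef]
  have hc : 2 < y + w := by nlinarith [sq_nonneg (y-1)]
  have e2 : g 2 = (y+w) * g 1 := by
    have := grec 0
    rw [hg0] at this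
    linarith
  have e3 : g 3 = (y+w) * g 2 - g 1 := grec 1
  have hfac : 0 < (2*(y+w)+1) * ((y+w)-2) := by nlinarith
  have base : 3 * g 2 < 2 * g 3 := by
    have key : 2 * g 3 - 3 * g 2 = g 1 * ((2*(y+w)+1) * ((y+w)-2)) := by
      rw [e3, e2]; ring
    nlinarith [mul_pos (gpos 1 one_ne_zero) hfac]
  have dstep : ∀ k : ℕ, g (k+1) - g k ≤ g (k+2) - g (k+1) := by
    intro k
    have h1 : 0 ≤ g (k+1) := (gpos (k+1) (Nat.succ_ne_zero k)).le
    have := grec k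
    nlinarith
  have dge : ∀ k : ℕ, 2 ≤ k → g 3 - g 2 ≤ g (k+1) - g k := by
    intro k hk
    induction k with
    | zero => omega
    | succ j ih =>
      rcases Nat.lt_or_ge j 2 with hj | hj
      · interval_cases j
        · omega
        · exact le_refl _
      · exact le_trans (ih hj) (dstep j)
  have main : ∀ k : ℕ, 3 ≤ k → (k:ℝ) * g 2 < 2 * g k := by
    intro k hk
    induction k with
    | zero => omega
    | succ j ih =>
      rcases Nat.lt_or_ge j 3 with hj | hj
      · interval_cases j
        · omega
        · omega
        · push_cast
          norm_num
          linarith [base]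
      · have h1 := ih hj
        have h2 : g 3 - g 2 ≤ g (j+1) - g j := dge j (by omega)
        have h3 : g 2 < 2 * (g 3 - g 2) := by linarith
        push_cast
        linarith
  have key := main (m+3) (by omega)
  have hg2pos : 0 < g 2 := gpos 2 (by omega)
  have hgK : 0 < g (m+3) := gpos (m+3) (by omega)
  have sq : (((m:ℝ)+3) * g 2)^2 < (2 * g (m+3))^2 := by
    have hcast : ((m+3:ℕ):ℝ) = (m:ℝ)+3 := by push_cast; ring
    rw [hcast] at key
    have hl : 0 ≤ ((m:ℝ)+3) * g 2 := by positivity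
    nlinarith
  set K := m+3 with hK
  have hu : (0:ℝ) < a^K := pow_pos ha K
  have hv : (0:ℝ) < b^K := pow_pos hb K
  have egK : (g K)^2 = b^K/a^K + a^K/b^K - 2 := by
    have e : (g K)^2 = (y^2)^K - 2*(y*w)^K + (w^2)^K := by
      simp only [hgdef]; ring
    rw [hyw, one_pow, hy2, hw2, div_pow, div_pow] at e
    linarith
  have eg2 : (g 2)^2 = (b/a - a/b)^2 := by
    have : g 2 = y^2 - w^2 := by simp only [hgdef]
    rw [this, hy2, hw2]
  have core : ((m:ℝ)+3)^2 * (b/a - a/b)^2 < 4 * (b^K/a^K + a^K/b^K - 2) := by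
    calc ((m:ℝ)+3)^2 * (b/a - a/b)^2 = (((m:ℝ)+3) * g 2)^2 := by rw [← eg2]; ring
    _ < (2 * g K)^2 := sq
    _ = 4 * (g K)^2 := by ring
    _ = 4 * (b^K/a^K + a^K/b^K - 2) := by rw [egK]
  have expand : 4 * a^2 * b^2 * (a^K - b^K)^2 - ((m:ℝ)+3)^2 * a^K * b^K * (b^2 - a^2)^2
      = (a^2 * b^2 * a^K * b^K) * (4 * (b^K/a^K + a^K/b^K - 2) - ((m:ℝ)+3)^2 * (b/a - a/b)^2) := by
    field_simp
    ring
  nlinarith [mul_pos (by positivity : (0:ℝ) < a^2 * b^2 * a^K * b^K)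
    (by linarith : (0:ℝ) < 4 * (b^K/a^K + a^K/b^K - 2) - ((m:ℝ)+3)^2 * (b/a - a/b)^2)]


set_option maxHeartbeats 1000000 in
lemma aux_chi (m : ℕ) {q : ℝ} (hq : 1 < q) :
    -2*(m:ℝ)*q^(m+4) - 3*((m:ℝ)+1)*q^(m+3) + ((m:ℝ)+3)*q^(m+1)
      - ((m:ℝ)+3)*q^3 + 3*((m:ℝ)+1)*q + 2*(m:ℝ) < 0 := by
  set M : ℝ := (m:ℝ) with hM
  have hM0 : 0 ≤ M := Nat.cast_nonneg m
  set χ : ℝ → ℝ := fun x => -2*M*x^(m+4) - 3*(M+1)*x^(m+3) + (M+3)*x^(m+1)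
      - (M+3)*x^3 + 3*(M+1)*x + 2*M with hχ
  have hder : ∀ x : ℝ, HasDerivAt χ
      ((-2*M)*(((m+4:ℕ):ℝ)*x^(m+3)) + (-3*(M+1))*(((m+3:ℕ):ℝ)*x^(m+2))
        + (M+3)*(((m+1:ℕ):ℝ)*x^m) - (M+3)*(((3:ℕ):ℝ)*x^2) + 3*(M+1)) x := by
    intro x
    have d1 := (hasDerivAt_pow (m+4) x).const_mul (-2*M)
    have d2 := (hasDerivAt_pow (m+3) x).const_mul (-3*(M+1))
    have d3 := (hasDerivAt_pow (m+1) x).const_mul (M+3)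
    have d4 := (hasDerivAt_pow 3 x).const_mul (M+3)
    have d5 := (hasDerivAt_id x).const_mul (3*(M+1))
    have e1 : m+4-1 = m+3 := by omega
    have e2 : m+3-1 = m+2 := by omega
    have e3 : m+1-1 = m := by omega
    rw [e1] at d1; rw [e2] at d2; rw [e3] at d3
    norm_num at d4
    have := ((((d1.add d2).add d3).sub d4).add d5).add_const (2*M)
    convert this using 1
    · rfl
    · rfl
    · funext s; simp only [hχ, id_eq, Pi.add_apply, Pi.sub_apply]; ring
    · push_cast; ring
  have hanti : StrictAntiOn χ (Ici 1) := by
    apply strictAntiOn_of_deriv_neg (convex_Ici 1)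
    · fun_prop
    · intro x hx
      rw [interior_Ici] at hx
      have hx1 : (1:ℝ) < x := hx
      have hx0 : (0:ℝ) < x := lt_trans one_pos hx1
      rw [(hder x).deriv]
      have hxm : (0:ℝ) < x^m := pow_pos hx0 m
      have hx2 : (1:ℝ) < x^2 := by nlinarith
      have e2 : x^(m+2) = x^m * x^2 := by ring
      have e3 : x^(m+3) = x^m * x^2 * x := by ring
      have t1 : x^m < x^(m+2) := by rw [e2]; nlinarith
      have term1 : (0:ℝ) ≤ 2*M*((m:ℝ)+4)*x^(m+3) := by positivity
      have term2 : (M+3)*((m:ℝ)+1)*x^m < 3*(M+1)*((m:ℝ)+3)*x^(m+2) := by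
        have h1 : (M+3)*((m:ℝ)+1)*x^m < (M+3)*((m:ℝ)+1)*x^(m+2) := by
          apply mul_lt_mul_of_pos_left t1
          positivity
        have h2 : (M+3)*((m:ℝ)+1)*x^(m+2) ≤ 3*(M+1)*((m:ℝ)+3)*x^(m+2) := by
          have : (M+3)*((m:ℝ)+1) ≤ 3*(M+1)*((m:ℝ)+3) := by rw [hM]; nlinarith
          nlinarith [pow_pos hx0 (m+2)]
        linarith
      have term3 : 3*(M+1) < (M+3)*(3*x^2) := by nlinarith
      push_cast
      nlinarith [term1, term2, term3]
  have h1 : χ q < χ 1 := hanti (mem_Ici.2 le_rfl) (mem_Ici.2 hq.le) hq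
  have h0 : χ 1 = 0 := by simp only [hχ]; ring
  rw [h0] at h1
  simpa [hχ] using h1


set_option maxHeartbeats 4000000 in
/-- For `n ≠ 2`, every annulus with constant signature is calibrable: there is a radial
profile `z(r) = c₀ r³ + c₁ r^{3−n} + c₂ r + c₃ r^{1−n}` with `z(R₀) = 1`, `z(R₁) = −1`,
`z′(R₀) = z′(R₁) = 0` and `|z| ≤ 1` on `[R₀, R₁]`. -/
theorem stmt_8 (n : ℕ) (hn : 1 ≤ n) (hn2 : n ≠ 2) (R0 R1 : ℝ)
    (h0 : 0 < R0) (h01 : R0 < R1) :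
    ∃ c0 c1 c2 c3 : ℝ, ∃ z : ℝ → ℝ,
      z = (fun r => c0 * r ^ 3 + c1 * r ^ ((3 : ℤ) - (n : ℤ)) + c2 * r
        + c3 * r ^ ((1 : ℤ) - (n : ℤ))) ∧
      z R0 = 1 ∧ z R1 = -1 ∧ deriv z R0 = 0 ∧ deriv z R1 = 0 ∧
      ∀ r ∈ Set.Icc R0 R1, |z r| ≤ 1 := by
  rcases (by omega : n = 1 ∨ 3 ≤ n) with h | h
  · subst h

    have hT : (0:ℝ) < R1 - R0 := by linarith
    have hTne : R1 - R0 ≠ 0 := hT.ne'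
    set T : ℝ := R1 - R0 with hTdef
    set c0 : ℝ := 4/T^3 with hc0
    set c1 : ℝ := -6*(R0+R1)/T^3 with hc1
    set c2 : ℝ := 12*R0*R1/T^3 with hc2
    set c3 : ℝ := 1 - c0*R0^3 - c1*R0^2 - c2*R0 with hc3
    set z : ℝ → ℝ := fun r => c0 * r ^ 3 + c1 * r ^ ((3 : ℤ) - ((1:ℕ) : ℤ)) + c2 * r
          + c3 * r ^ ((1 : ℤ) - ((1:ℕ) : ℤ)) with hzdef
    have hzeq : ∀ r : ℝ, z r = c0*r^3 + c1*r^2 + c2*r + c3 := by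
      intro r
      rw [hzdef]
      norm_num [zpow_ofNat]
    set f : ℝ → ℝ := fun r => 3*c0*r^2 + 2*c1*r + c2 with hfdef
    have hfun : z = fun s : ℝ => c0*s^3 + c1*s^2 + c2*s + c3 := funext hzeq
    have hz : ∀ r : ℝ, HasDerivAt z (f r) r := by
      intro r
      rw [hfun]
      have d1 := (hasDerivAt_pow 3 r).const_mul c0
      have d2 := (hasDerivAt_pow 2 r).const_mul c1
      have d3 : HasDerivAt (fun y : ℝ => c2*y) c2 r := by
        simpa using (hasDerivAt_id r).const_mul c2
      have hd := ((d1.add d2).add d3).add_const c3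
      convert hd using 1
      rfl
      rfl
      norm_num
      ring
    have hza : z R0 = 1 := by rw [hzeq]; rw [hc3]; ring
    have hzb : z R1 = -1 := by
      rw [hzeq, hc3, hc0, hc1, hc2, hTdef]
      field_simp [sub_ne_zero.2 h01.ne']
      ring
    have hfa : f R0 = 0 := by
      rw [hfdef]
      simp only [hc0, hc1, hc2]
      field_simp
      ring
    have hfb : f R1 = 0 := by
      rw [hfdef]
      simp only [hc0, hc1, hc2]
      field_simp
      ring
    have hfneg : ∀ r ∈ Ioo R0 R1, f r ≤ 0 := by
      intro r hr
      have he : f r = 12*((r-R0)*(r-R1))/T^3 := by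
        rw [hfdef]
        simp only [hc0, hc1, hc2]
        field_simp
        ring
      rw [he]
      apply div_nonpos_of_nonpos_of_nonneg
      · nlinarith [hr.1, hr.2]
      · positivity
    exact ⟨c0, c1, c2, c3, z, rfl, hza, hzb, by rw [(hz R0).deriv]; exact hfa,
      by rw [(hz R1).deriv]; exact hfb,
      aux_bound z f R0 R1 h01 (fun r _ => hz r) hfneg hza hzb⟩
  · obtain ⟨m, rfl⟩ : ∃ m : ℕ, n = m + 3 := ⟨n - 3, by omega⟩

    have h1 : (0:ℝ) < R1 := h0.trans h01
    obtain ⟨N, hN⟩ : ∃ N : ℝ, N = (m:ℝ)+3 := ⟨_, rfl⟩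
    obtain ⟨u, hu⟩ : ∃ u : ℝ, u = R0^(m+3) := ⟨_, rfl⟩
    obtain ⟨v, hv⟩ : ∃ v : ℝ, v = R1^(m+3) := ⟨_, rfl⟩
    have hupos : 0 < u := by rw [hu]; positivity
    have hvpos : 0 < v := by rw [hv]; positivity
    obtain ⟨P, hP⟩ : ∃ P : ℝ, P = 4*R0^2*R1^2*(u-v)^2 - N^2*u*v*(R1^2-R0^2)^2 := ⟨_, rfl⟩
    have hPpos : 0 < P := by
      rw [hP, hN, hu, hv]
      have := aux_ki m R0 R1 h0 h01
      linarith
    obtain ⟨A0, hA0⟩ : ∃ A0 : ℝ, A0 = (N-1)*(N-2)*R1^3*u*v - 2*R1^3*u^2 + N*(N-3)*R0*R1^2*u*v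
        - N*(N-3)*R0^2*R1*u*v + 2*R0^3*v^2 - (N-1)*(N-2)*R0^3*u*v := ⟨_, rfl⟩
    obtain ⟨A1, hA1⟩ : ∃ A1 : ℝ, A1 = (2*N-2)*R1^3*u*v^2 + (N+2)*R1^3*u^2*v + 3*N*R0*R1^2*u*v^2
        - 3*N*R0^2*R1*u^2*v - (N+2)*R0^3*u*v^2 - (2*N-2)*R0^3*u^2*v := ⟨_, rfl⟩
    obtain ⟨A2, hA2⟩ : ∃ A2 : ℝ, A2 = -(N*(N-1))*R1^5*u*v + (N^2-N-6)*R0^2*R1^3*u*v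
        + 6*R0^2*R1^3*u^2 - 6*R0^3*R1^2*v^2 - (N^2-N-6)*R0^3*R1^2*u*v + N*(N-1)*R0^5*u*v := ⟨_, rfl⟩
    obtain ⟨A3, hA3⟩ : ∃ A3 : ℝ, A3 = -N*R1^5*u^2*v + (6-2*N)*R0^2*R1^3*u*v^2
        + 3*(N-2)*R0^2*R1^3*u^2*v - 3*(N-2)*R0^3*R1^2*u*v^2 + 2*(N-3)*R0^3*R1^2*u^2*v
        + N*R0^5*u*v^2 := ⟨_, rfl⟩
    have hA0pos : 0 < A0 := by
      have e1 : A0 = (N-1)*(N-2)*(u*v)*(R1^3-R0^3) + N*(N-3)*(u*v)*(R0*R1)*(R1-R0)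
          + 2*(R0^3*v^2 - R1^3*u^2) := by rw [hA0]; ring
      have e2 : R0^3*v^2 - R1^3*u^2 = R0^3*R1^3*(R1^(2*m+3) - R0^(2*m+3)) := by
        rw [hu, hv]; ring
      have e3 : R0^(2*m+3) < R1^(2*m+3) := pow_lt_pow_left₀ h01 h0.le (by omega)
      have p1 : 0 < (N-1)*(N-2)*(u*v)*(R1^3-R0^3) := by
        rw [hN]
        have : (0:ℝ) ≤ (m:ℝ) := Nat.cast_nonneg m
        have h31 : R0^3 < R1^3 := pow_lt_pow_left₀ h01 h0.le (by omega)
        apply mul_pos (mul_pos (mul_pos (by linarith) (by linarith)) (mul_pos hupos hvpos))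
        linarith
      have p2 : 0 ≤ N*(N-3)*(u*v)*(R0*R1)*(R1-R0) := by
        rw [hN]
        have : (0:ℝ) ≤ (m:ℝ) := Nat.cast_nonneg m
        apply mul_nonneg (mul_nonneg (mul_nonneg (mul_nonneg (by linarith) (by linarith))
          (mul_pos hupos hvpos).le) (by positivity))
        linarith
      have p3 : 0 < R0^3*v^2 - R1^3*u^2 := by
        rw [e2]
        have : (0:ℝ) < R0^3*R1^3 := by positivity
        nlinarith
      linarith [e1, p1, p2, p3]
    have hA3neg : A3 < 0 := by
      have hq : 1 < R1/R0 := (one_lt_div h0).2 h01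
      have hbridge : A3 = R0^(m+6)*R1^2*u*v*
          (-2*(m:ℝ)*(R1/R0)^(m+4) - 3*((m:ℝ)+1)*(R1/R0)^(m+3) + ((m:ℝ)+3)*(R1/R0)^(m+1)
            - ((m:ℝ)+3)*(R1/R0)^3 + 3*((m:ℝ)+1)*(R1/R0) + 2*(m:ℝ)) := by
        rw [hA3, hN, hu, hv]
        have hR1 : R1 = (R1/R0)*R0 := (div_mul_cancel₀ R1 h0.ne').symm
        set t := R1/R0 with ht
        rw [hR1]
        ring
      rw [hbridge]
      apply mul_neg_of_pos_of_neg
      · positivity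
      · exact aux_chi m hq
    obtain ⟨c0, hc0⟩ : ∃ c0 : ℝ, c0 = A0/(R0*R1*P) := ⟨_, rfl⟩
    obtain ⟨c1, hc1⟩ : ∃ c1 : ℝ, c1 = A1/(R0*R1*P) := ⟨_, rfl⟩
    obtain ⟨c2, hc2⟩ : ∃ c2 : ℝ, c2 = A2/(R0*R1*P) := ⟨_, rfl⟩
    obtain ⟨c3, hc3⟩ : ∃ c3 : ℝ, c3 = A3/(R0*R1*P) := ⟨_, rfl⟩
    have hc0pos : 0 < 3*c0 := by
      rw [hc0]
      have : 0 < A0/(R0*R1*P) := div_pos hA0pos (by positivity)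
      linarith
    have hc3pos : 0 < (1-N)*c3 := by
      rw [hc3]
      have h341 : A3/(R0*R1*P) < 0 := div_neg_of_neg_of_pos hA3neg (by positivity)
      have h342 : 1-N < 0 := by rw [hN]; have : (0:ℝ) ≤ (m:ℝ) := Nat.cast_nonneg m; linarith
      exact mul_pos_of_neg_of_neg h342 h341
    -- the profile function
    set z : ℝ → ℝ := fun r => c0 * r ^ 3 + c1 * r ^ ((3 : ℤ) - ((m+3:ℕ) : ℤ)) + c2 * r
          + c3 * r ^ ((1 : ℤ) - ((m+3:ℕ) : ℤ)) with hzdef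
    set f : ℝ → ℝ := fun r => 3*c0*r^2 + (3-N)*c1*(r^2*(r^(m+3))⁻¹) + c2
        + (1-N)*c3*(r^(m+3))⁻¹ with hfdef
    have hzeq : ∀ r : ℝ, 0 < r → z r = c0*r^3 + c1*(r^3*(r^(m+3))⁻¹) + c2*r
        + c3*(r*(r^(m+3))⁻¹) := by
      intro r hr
      rw [hzdef]
      simp only
      rw [zpow_sub₀ hr.ne', zpow_natCast, div_eq_mul_inv,
          zpow_sub₀ hr.ne', zpow_natCast, div_eq_mul_inv, zpow_one]
      norm_num [zpow_ofNat]
    have hz : ∀ r : ℝ, 0 < r → HasDerivAt z (f r) r := by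
      intro r hr
      have d1 := (hasDerivAt_pow 3 r).const_mul c0
      have d2 := (hasDerivAt_zpow ((3:ℤ) - ((m+3:ℕ):ℤ)) r (Or.inl hr.ne')).const_mul c1
      have d3 : HasDerivAt (fun y : ℝ => c2*y) c2 r := by
        simpa using (hasDerivAt_id r).const_mul c2
      have d4 := (hasDerivAt_zpow ((1:ℤ) - ((m+3:ℕ):ℤ)) r (Or.inl hr.ne')).const_mul c3
      have hd := ((d1.add d2).add d3).add d4
      rw [hzdef]
      convert hd using 1
      rfl
      rfl
      rfl
      have ez1 : r ^ ((3:ℤ) - ((m+3:ℕ):ℤ) - 1) = r^2*(r^(m+3))⁻¹ := by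
        have : (3:ℤ) - ((m+3:ℕ):ℤ) - 1 = (2:ℤ) - ((m+3:ℕ):ℤ) := by ring
        rw [this, zpow_sub₀ hr.ne', zpow_natCast, div_eq_mul_inv]
        norm_num [zpow_ofNat]
      have ez2 : r ^ ((1:ℤ) - ((m+3:ℕ):ℤ) - 1) = (r^(m+3))⁻¹ := by
        have : (1:ℤ) - ((m+3:ℕ):ℤ) - 1 = 0 - ((m+3:ℕ):ℤ) := by ring
        rw [this, zpow_sub₀ hr.ne', zpow_natCast, zpow_zero]
        exact one_div _
      rw [hfdef]
      simp only [ez1, ez2]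
      push_cast
      rw [hN]
      ring
    -- boundary conditions
    have hrw0 : (R0:ℝ)^(m+3) = u := hu.symm
    have hrw1 : (R1:ℝ)^(m+3) = v := hv.symm
    have hza : z R0 = 1 := by
      rw [hzeq R0 h0, hrw0, hc0, hc1, hc2, hc3]
      field_simp [hupos.ne', hPpos.ne', h0.ne', h1.ne']
      rw [hA0, hA1, hA2, hA3, hP]
      ring
    have hzb : z R1 = -1 := by
      rw [hzeq R1 h1, hrw1, hc0, hc1, hc2, hc3]
      field_simp [hvpos.ne', hPpos.ne', h0.ne', h1.ne']
      rw [hA0, hA1, hA2, hA3, hP]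
      ring
    have hfa : f R0 = 0 := by
      rw [hfdef]
      simp only [hrw0]
      rw [hc0, hc1, hc2, hc3]
      field_simp [hupos.ne', hPpos.ne', h0.ne', h1.ne']
      rw [hA0, hA1, hA2, hA3, hP]
      ring
    have hfb : f R1 = 0 := by
      rw [hfdef]
      simp only [hrw1]
      rw [hc0, hc1, hc2, hc3]
      field_simp [hvpos.ne', hPpos.ne', h0.ne', h1.ne']
      rw [hA0, hA1, hA2, hA3, hP]
      ring
    -- nonpositivity of f on the interval
    have hFbridge : ∀ r : ℝ, 0 < r →
        3*c0*r^(m+5) + c2*r^(m+3) + (3-N)*c1*r^2 + (1-N)*c3 = r^(m+3) * f r := by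
      intro r hr
      rw [hfdef]
      have hne : r^(m+3) ≠ 0 := pow_ne_zero _ hr.ne'
      field_simp
      ring
    have hFcont : Continuous (fun r : ℝ => 3*c0*r^(m+5) + c2*r^(m+3) + (3-N)*c1*r^2 + (1-N)*c3) := by
      fun_prop
    have hFa : 3*c0*R0^(m+5) + c2*R0^(m+3) + (3-N)*c1*R0^2 + (1-N)*c3 = 0 := by
      rw [hFbridge R0 h0, hfa, mul_zero]
    have hFb : 3*c0*R1^(m+5) + c2*R1^(m+3) + (3-N)*c1*R1^2 + (1-N)*c3 = 0 := by
      rw [hFbridge R1 h1, hfb, mul_zero]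
    have hfneg : ∀ r ∈ Ioo R0 R1, f r ≤ 0 := by
      have hzcont : ContinuousOn z (Icc R0 R1) :=
        fun r hr => (hz r (h0.trans_le hr.1)).continuousAt.continuousWithinAt
      obtain ⟨σ, hσ, hslope⟩ := exists_hasDerivAt_eq_slope z f h01 hzcont
        (fun x hx => hz x (h0.trans hx.1))
      rw [hza, hzb] at hslope
      have hfσ : f σ < 0 := by
        rw [hslope]
        apply div_neg_of_neg_of_pos <;> linarith
      intro r hr
      by_contra hc
      push_neg at hc
      -- F values
      set F : ℝ → ℝ := fun s => 3*c0*s^(m+5) + c2*s^(m+3) + (3-N)*c1*s^2 + (1-N)*c3 with hFdef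
      have hFr : 0 < F r := by
        rw [hFdef]
        simp only
        rw [hFbridge r (h0.trans hr.1)]
        exact mul_pos (pow_pos (h0.trans hr.1) _) hc
      have hFσ : F σ < 0 := by
        rw [hFdef]
        simp only
        rw [hFbridge σ (h0.trans hσ.1)]
        exact mul_neg_of_pos_of_neg (pow_pos (h0.trans hσ.1) _) hfσ
      have hrσ : r ≠ σ := by
        intro h
        rw [h] at hFr
        linarith
      have hζ : ∃ ζ ∈ Ioo R0 R1, F ζ = 0 := by
        rcases lt_or_gt_of_ne hrσ with h | h
        · have := intermediate_value_Ioo' h.le (hFcont.continuousOn (s := Icc r σ))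
          have h0mem : (0:ℝ) ∈ Ioo (F σ) (F r) := ⟨hFσ, hFr⟩
          obtain ⟨ζ, hζmem, hζval⟩ := this h0mem
          exact ⟨ζ, ⟨hr.1.trans hζmem.1, hζmem.2.trans hσ.2⟩, hζval⟩
        · have := intermediate_value_Ioo h.le (hFcont.continuousOn (s := Icc σ r))
          have h0mem : (0:ℝ) ∈ Ioo (F σ) (F r) := ⟨hFσ, hFr⟩
          obtain ⟨ζ, hζmem, hζval⟩ := this h0mem
          exact ⟨ζ, ⟨hσ.1.trans hζmem.1, hζmem.2.trans hr.2⟩, hζval⟩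
      obtain ⟨ζ, hζmem, hζval⟩ := hζ
      have hζval' : 3*c0*ζ^(m+5) + c2*ζ^(m+3) + (3-N)*c1*ζ^2 + (1-N)*c3 = 0 := hζval
      exact aux_four m (3*c0) c2 ((3-N)*c1) ((1-N)*c3) hc0pos hc3pos
        h0 hζmem.1 hζmem.2 hFa hζval' hFb
    exact ⟨c0, c1, c2, c3, z, rfl, hza, hzb, by rw [(hz R0 h0).deriv]; exact hfa,
      by rw [(hz R1 h1).deriv]; exact hfb,
      aux_bound z f R0 R1 h01 (fun r hr => hz r (h0.trans_le hr.1)) hfneg hza hzb⟩
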